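/- Let A_j ~ Poisson(λ_j) and U_j ~ Bernoulli(1/2) for j = 1,...,n, all mutually independent, and let d = Σ_{j=1}^n A_j U_j with d̄ = E[d] = (1/2)Σ_j λ_j. Then P(|d - d̄| ≥ d̄/2) ≤ 2·e^{-0.008·d̄} + 4·e^{-0.03·d̄/λ_max}, where λ_max = max_j λ_j. -/

import Mathlib

open MeasureTheory ProbabilityTheory Finset
open scoped NNReal ENNReal Nat

section aux

lemma aux_hasSum_exp_series (x : ℝ) : HasSum (fun k : ℕ => x ^ k / k !) (Real.exp x) := by
  rw [Real.exp_eq_exp_ℝ]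
  exact NormedSpace.expSeries_div_hasSum_exp x

lemma aux_poissonPMF_apply (r : ℝ≥0) (k : ℕ) :
    poissonPMF r k = ENNReal.ofReal (poissonPMFReal r k) := rfl

lemma aux_poisson_summand_eq (r : ℝ≥0) (t : ℝ) (k : ℕ) :
    Real.exp (t * k) * poissonPMFReal r k
      = Real.exp (-(r : ℝ)) * (((r : ℝ) * Real.exp t) ^ k / k !) := by
  rw [poissonPMFReal, mul_comm t (k : ℝ), Real.exp_nat_mul, mul_pow]
  ring

lemma aux_poisson_summable (r : ℝ≥0) (t : ℝ) :
    Summable (fun k : ℕ => Real.exp (t * k) * poissonPMFReal r k) := by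
  simp only [aux_poisson_summand_eq]
  exact (Real.summable_pow_div_factorial _).mul_left _

lemma aux_poisson_exp_integrable (r : ℝ≥0) (t : ℝ) :
    Integrable (fun k : ℕ => Real.exp (t * k)) (poissonMeasure r) := by
  refine ⟨(measurable_from_top (f := fun k : ℕ => Real.exp (t * k))).aestronglyMeasurable, ?_⟩
  rw [HasFiniteIntegral, MeasureTheory.lintegral_countable']
  have h1 : ∀ k : ℕ, ‖Real.exp (t * k)‖ₑ * poissonMeasure r {k}
      = ENNReal.ofReal (Real.exp (t * k) * poissonPMFReal r k) := by
    intro k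
    rw [show poissonMeasure r {k} = poissonPMF r k from
      by rw [poissonMeasure_singleton, aux_poissonPMF_apply, poissonPMFReal], aux_poissonPMF_apply,
      ← ofReal_norm, Real.norm_eq_abs, abs_of_pos (Real.exp_pos _),
      ← ENNReal.ofReal_mul (Real.exp_pos _).le]
  simp only [h1]
  rw [← ENNReal.ofReal_tsum_of_nonneg
    (fun k => mul_nonneg (Real.exp_pos _).le poissonPMFReal_nonneg) (aux_poisson_summable r t)]
  exact ENNReal.ofReal_lt_top

lemma aux_poisson_exp_integral (r : ℝ≥0) (t : ℝ) :
    ∫ k : ℕ, Real.exp (t * k) ∂(poissonMeasure r) = Real.exp ((r : ℝ) * (Real.exp t - 1)) := by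
  rw [integral_poissonMeasure' (aux_poisson_exp_integrable r t)]
  have h1 : ∀ k : ℕ, (Real.exp (-(r : ℝ)) * (r : ℝ) ^ k / k !) • Real.exp (t * k)
      = Real.exp (-(r : ℝ)) * (((r : ℝ) * Real.exp t) ^ k / k !) := by
    intro k
    rw [smul_eq_mul, mul_comm]
    exact aux_poisson_summand_eq r t k
  simp only [h1]
  rw [tsum_mul_left, (aux_hasSum_exp_series ((r : ℝ) * Real.exp t)).tsum_eq, ← Real.exp_add]
  ring_nf

lemma aux_intA {Ω : Type*} [MeasurableSpace Ω] {μ : Measure Ω} {A : Ω → ℕ}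
    (hAm : Measurable A) {r : ℝ≥0} (hA : Measure.map A μ = poissonMeasure r) (t : ℝ) :
    Integrable (fun ω => Real.exp (t * (A ω : ℝ))) μ := by
  have h := (integrable_map_measure (μ := μ) (f := A)
    (g := fun k : ℕ => Real.exp (t * (k : ℝ)))
    (by exact (measurable_from_top (f := fun k : ℕ => Real.exp (t * (k : ℝ)))).aestronglyMeasurable)
    hAm.aemeasurable).mp (by rw [hA]; exact aux_poisson_exp_integrable r t)
  exact h

lemma aux_intgA {Ω : Type*} [MeasurableSpace Ω] {μ : Measure Ω} {A : Ω → ℕ}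
    (hAm : Measurable A) {r : ℝ≥0} (hA : Measure.map A μ = poissonMeasure r) (t : ℝ) :
    ∫ ω, Real.exp (t * (A ω : ℝ)) ∂μ = Real.exp ((r : ℝ) * (Real.exp t - 1)) := by
  have h := integral_map (μ := μ) (f := fun k : ℕ => Real.exp (t * (k : ℝ)))
    hAm.aemeasurable
    (by exact (measurable_from_top (f := fun k : ℕ => Real.exp (t * (k : ℝ)))).aestronglyMeasurable)
  rw [hA, aux_poisson_exp_integral] at h
  exact h.symm

lemma aux_natCast_meas {Ω : Type*} [MeasurableSpace Ω] {U : Ω → ℕ} (hUm : Measurable U) :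
    Measurable (fun ω => (U ω : ℝ)) :=
  (measurable_from_top (f := fun k : ℕ => (k : ℝ))).comp hUm

lemma aux_intgU {Ω : Type*} [MeasurableSpace Ω] {μ : Measure Ω} [IsProbabilityMeasure μ]
    {U : Ω → ℕ} (hUm : Measurable U) (hU01 : ∀ ω, U ω = 0 ∨ U ω = 1)
    (hU : μ {ω | U ω = 1} = 1 / 2) :
    ∫ ω, (U ω : ℝ) ∂μ = 1 / 2 := by
  have heq : (fun ω => (U ω : ℝ)) = Set.indicator {ω | U ω = 1} (fun _ => (1 : ℝ)) := by
    funext ω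
    rcases hU01 ω with h | h <;> simp [h, Set.indicator_apply, Set.mem_setOf_eq]
  have hms : MeasurableSet {ω | U ω = 1} := hUm (measurableSet_singleton 1)
  rw [heq, integral_indicator_const _ hms, measureReal_def, hU]
  simp [ENNReal.toReal_div]

lemma aux_intU {Ω : Type*} [MeasurableSpace Ω] {μ : Measure Ω} [IsProbabilityMeasure μ]
    {U : Ω → ℕ} (hUm : Measurable U) (hU01 : ∀ ω, U ω = 0 ∨ U ω = 1) :
    Integrable (fun ω => (U ω : ℝ)) μ := by
  refine (integrable_const (1 : ℝ)).mono'
    (aux_natCast_meas hUm).aestronglyMeasurable (ae_of_all _ fun ω => ?_)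
  rcases hU01 ω with h | h <;> simp [h]

lemma aux_single_int {Ω : Type*} [MeasurableSpace Ω] {μ : Measure Ω} [IsProbabilityMeasure μ]
    {A U : Ω → ℕ} (hAm : Measurable A) (hUm : Measurable U) (hAU : IndepFun A U μ)
    {r : ℝ≥0} (hA : Measure.map A μ = poissonMeasure r)
    (hU01 : ∀ ω, U ω = 0 ∨ U ω = 1) (hU : μ {ω | U ω = 1} = 1 / 2) (t : ℝ) :
    Integrable (fun ω => Real.exp (t * ((A ω : ℝ) * (U ω : ℝ)))) μ ∧
    ∫ ω, Real.exp (t * ((A ω : ℝ) * (U ω : ℝ))) ∂μ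
      = (1 + Real.exp ((r : ℝ) * (Real.exp t - 1))) / 2 := by
  have heq : (fun ω => Real.exp (t * ((A ω : ℝ) * (U ω : ℝ))))
      = fun ω => 1 + (U ω : ℝ) * (Real.exp (t * (A ω : ℝ)) - 1) := by
    funext ω
    rcases hU01 ω with h | h <;> simp [h]
  have hindfg : IndepFun (fun ω => (U ω : ℝ)) (fun ω => Real.exp (t * (A ω : ℝ)) - 1) μ :=
    hAU.symm.comp (measurable_from_top (f := fun k : ℕ => (k : ℝ)))
      (measurable_from_top (f := fun k : ℕ => Real.exp (t * (k : ℝ)) - 1))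
  have hintf : Integrable (fun ω => Real.exp (t * (A ω : ℝ)) - 1) μ :=
    (aux_intA hAm hA t).sub (integrable_const 1)
  have hintU : Integrable (fun ω => (U ω : ℝ)) μ := aux_intU hUm hU01
  have hprod : Integrable ((fun ω => (U ω : ℝ)) * fun ω => Real.exp (t * (A ω : ℝ)) - 1) μ :=
    hindfg.integrable_mul hintU hintf
  constructor
  · rw [heq]
    exact (integrable_const 1).add hprod
  · rw [heq]
    have hprod' : Integrable (fun ω => (U ω : ℝ) * (Real.exp (t * (A ω : ℝ)) - 1)) μ := hprod
    rw [integral_add (integrable_const 1) hprod']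
    rw [show (fun ω => (U ω : ℝ) * (Real.exp (t * (A ω : ℝ)) - 1))
        = ((fun ω => (U ω : ℝ)) * fun ω => Real.exp (t * (A ω : ℝ)) - 1) from rfl,
      hindfg.integral_mul_eq_mul_integral hintU.1 hintf.1, aux_intgU hUm hU01 hU,
      integral_sub (aux_intA hAm hA t) (integrable_const 1), aux_intgA hAm hA t]
    simp
    ring

lemma aux_indep_sum_single {Ω : Type*} [MeasurableSpace Ω] {μ : Measure Ω} {n : ℕ}
    {X : Fin n ⊕ Fin n → Ω → ℕ} (hmeas : ∀ j, Measurable (X j))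
    (hindep : iIndepFun X μ)
    (s : Finset (Fin n)) (j0 : Fin n) (hj0 : j0 ∉ s) :
    IndepFun (fun ω => ∑ j ∈ s, ((X (Sum.inl j) ω : ℝ) * (X (Sum.inr j) ω : ℝ)))
      (fun ω => ((X (Sum.inl j0) ω : ℝ) * (X (Sum.inr j0) ω : ℝ))) μ := by
  classical
  set S : Finset (Fin n ⊕ Fin n) := s.image Sum.inl ∪ s.image Sum.inr with hS
  set T : Finset (Fin n ⊕ Fin n) := {Sum.inl j0, Sum.inr j0} with hT
  have hST : Disjoint S T := by
    rw [Finset.disjoint_left]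
    intro a haS haT
    simp only [hS, hT, Finset.mem_union, Finset.mem_image, Finset.mem_insert,
      Finset.mem_singleton] at haS haT
    rcases haT with rfl | rfl <;> rcases haS with ⟨j, hj, hja⟩ | ⟨j, hj, hja⟩ <;>
      simp_all [Sum.inl.injEq, Sum.inr.injEq]
  have base := hindep.indepFun_finset S T hST hmeas
  have hm1 : ∀ j : {x // x ∈ s}, Sum.inl j.1 ∈ S :=
    fun j => Finset.mem_union_left _ (Finset.mem_image_of_mem _ j.2)
  have hm2 : ∀ j : {x // x ∈ s}, Sum.inr j.1 ∈ S :=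
    fun j => Finset.mem_union_right _ (Finset.mem_image_of_mem _ j.2)
  have hm3 : Sum.inl j0 ∈ T := Finset.mem_insert_self _ _
  have hm4 : Sum.inr j0 ∈ T := by simp [hT]
  set g : (∀ _ : {x // x ∈ S}, ℕ) → ℝ :=
    fun v => ∑ j ∈ s.attach, ((v ⟨Sum.inl j.1, hm1 j⟩ : ℝ) * (v ⟨Sum.inr j.1, hm2 j⟩ : ℝ))
    with hg
  set h : (∀ _ : {x // x ∈ T}, ℕ) → ℝ :=
    fun v => ((v ⟨Sum.inl j0, hm3⟩ : ℝ) * (v ⟨Sum.inr j0, hm4⟩ : ℝ)) with hh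
  have gmeas : Measurable g := by
    apply Finset.measurable_sum
    intro j _
    exact ((measurable_from_top (f := fun k : ℕ => (k : ℝ))).comp
      (measurable_pi_apply _)).mul
      ((measurable_from_top (f := fun k : ℕ => (k : ℝ))).comp (measurable_pi_apply _))
  have hmeas' : Measurable h :=
    ((measurable_from_top (f := fun k : ℕ => (k : ℝ))).comp (measurable_pi_apply _)).mul
      ((measurable_from_top (f := fun k : ℕ => (k : ℝ))).comp (measurable_pi_apply _))
  have key := base.comp gmeas hmeas'
  have hfeq : (fun ω => ∑ j ∈ s, ((X (Sum.inl j) ω : ℝ) * (X (Sum.inr j) ω : ℝ)))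
      = (g ∘ fun a (i : {x // x ∈ S}) => X i a) := by
    funext ω
    exact (Finset.sum_attach s fun j =>
      ((X (Sum.inl j) ω : ℝ) * (X (Sum.inr j) ω : ℝ))).symm
  have hgeq : (fun ω => ((X (Sum.inl j0) ω : ℝ) * (X (Sum.inr j0) ω : ℝ)))
      = (h ∘ fun a (i : {x // x ∈ T}) => X i a) := rfl
  rw [hfeq, hgeq]
  exact key

lemma aux_sum_exp_prod {Ω : Type*} [MeasurableSpace Ω] {μ : Measure Ω} [IsProbabilityMeasure μ]
    {n : ℕ} {X : Fin n ⊕ Fin n → Ω → ℕ} (hmeas : ∀ j, Measurable (X j))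
    (hindep : iIndepFun X μ) (lam : Fin n → ℝ≥0)
    (hsint : ∀ (t : ℝ) (j : Fin n),
      Integrable (fun ω => Real.exp (t * ((X (Sum.inl j) ω : ℝ) * (X (Sum.inr j) ω : ℝ)))) μ)
    (hsval : ∀ (t : ℝ) (j : Fin n),
      ∫ ω, Real.exp (t * ((X (Sum.inl j) ω : ℝ) * (X (Sum.inr j) ω : ℝ))) ∂μ
        = (1 + Real.exp ((lam j : ℝ) * (Real.exp t - 1))) / 2)
    (t : ℝ) (s : Finset (Fin n)) :
    Integrable (fun ω =>
      Real.exp (t * ∑ j ∈ s, ((X (Sum.inl j) ω : ℝ) * (X (Sum.inr j) ω : ℝ)))) μ ∧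
    ∫ ω, Real.exp (t * ∑ j ∈ s, ((X (Sum.inl j) ω : ℝ) * (X (Sum.inr j) ω : ℝ))) ∂μ
      = ∏ j ∈ s, ((1 + Real.exp ((lam j : ℝ) * (Real.exp t - 1))) / 2) := by
  classical
  induction s using Finset.induction_on with
  | empty => simp
  | insert j0 s hj0 ih =>
    have hind := aux_indep_sum_single hmeas hindep s j0 hj0
    have hexp := hind.exp_mul t t
    have heq : (fun ω =>
        Real.exp (t * ∑ j ∈ insert j0 s, ((X (Sum.inl j) ω : ℝ) * (X (Sum.inr j) ω : ℝ))))
        = ((fun ω => Real.exp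
              (t * ∑ j ∈ s, ((X (Sum.inl j) ω : ℝ) * (X (Sum.inr j) ω : ℝ))))
          * fun ω => Real.exp (t * ((X (Sum.inl j0) ω : ℝ) * (X (Sum.inr j0) ω : ℝ)))) := by
      funext ω
      rw [Finset.sum_insert hj0, Pi.mul_apply, mul_add, Real.exp_add]
      ring
    constructor
    · rw [heq]
      exact hexp.integrable_mul ih.1 (hsint t j0)
    · rw [heq, hexp.integral_mul_eq_mul_integral ih.1.1 (hsint t j0).1, ih.2, hsval t j0,
        Finset.prod_insert hj0]
      ring

lemma aux_exp_le_one_div {x : ℝ} (hx : x < 1) : Real.exp x ≤ 1/(1-x) := by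
  have h := Real.add_one_le_exp (-x)
  rw [Real.exp_neg] at h
  rw [le_div_iff₀ (by linarith)]
  have hp := Real.exp_pos x
  calc Real.exp x * (1-x) ≤ Real.exp x * (Real.exp x)⁻¹ :=
        mul_le_mul_of_nonneg_left (by linarith) hp.le
  _ = 1 := mul_inv_cancel₀ hp.ne'

lemma aux_one_add_exp_div_two_le (a : ℝ) : (1 + Real.exp a)/2 ≤ Real.exp (a/2 + a^2/8) := by
  have h := Real.cosh_le_exp_half_sq (a/2)
  have e1 : Real.exp (a/2) * Real.exp (a/2) = Real.exp a := by rw [← Real.exp_add]; ring_nf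
  have e2 : Real.exp (a/2) * Real.exp (-(a/2)) = 1 := by rw [← Real.exp_add]; simp
  have e3 : Real.exp (a/2) * Real.exp (-a/2) = 1 := by
    rw [← Real.exp_add, show a/2 + -a/2 = 0 by ring]; exact Real.exp_zero
  calc (1 + Real.exp a)/2 = Real.exp (a/2) * ((Real.exp (a/2) + Real.exp (-(a/2)))/2) := by
        field_simp
        nlinarith [e1, e2, e3]
  _ = Real.exp (a/2) * Real.cosh (a/2) := by rw [Real.cosh_eq]
  _ ≤ Real.exp (a/2) * Real.exp ((a/2)^2/2) := mul_le_mul_of_nonneg_left h (Real.exp_pos _).le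
  _ = Real.exp (a/2 + a^2/8) := by rw [← Real.exp_add]; ring_nf

lemma aux_prod_bound (n : ℕ) (lam : Fin n → ℝ≥0) (c : ℝ) :
    ∏ j, ((1 + Real.exp ((lam j : ℝ) * c))/2)
      ≤ Real.exp (c * (∑ j, (lam j : ℝ))/2 + c^2 * (∑ j, (lam j : ℝ)^2)/8) := by
  have hsum : ∑ j, ((lam j : ℝ) * c/2 + ((lam j : ℝ) * c)^2/8)
      = c * (∑ j, (lam j : ℝ))/2 + c^2 * (∑ j, (lam j : ℝ)^2)/8 := by
    rw [Finset.sum_add_distrib]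
    simp only [mul_pow]
    rw [← Finset.sum_div, ← Finset.sum_div, ← Finset.sum_mul, ← Finset.sum_mul]
    ring
  calc ∏ j, ((1 + Real.exp ((lam j : ℝ) * c))/2)
      ≤ ∏ j, Real.exp ((lam j : ℝ) * c/2 + ((lam j : ℝ) * c)^2/8) :=
        Finset.prod_le_prod (fun j _ => by positivity)
          (fun j _ => aux_one_add_exp_div_two_le _)
  _ = Real.exp (∑ j, ((lam j : ℝ) * c/2 + ((lam j : ℝ) * c)^2/8)) := (Real.exp_sum _ _).symm
  _ = _ := by rw [hsum]

end aux

set_option maxHeartbeats 2000000 in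
theorem thinned_poisson_sum_concentration
    {Ω : Type*} [MeasurableSpace Ω] (μ : Measure Ω) [IsProbabilityMeasure μ]
    (n : ℕ) (hn : 0 < n) (lam : Fin n → ℝ≥0)
    (X : Fin n ⊕ Fin n → Ω → ℕ)
    (hmeas : ∀ j, Measurable (X j))
    (hindep : iIndepFun X μ)
    (hA : ∀ j : Fin n, Measure.map (X (Sum.inl j)) μ = poissonMeasure (lam j))
    (hU01 : ∀ (j : Fin n) (ω : Ω), X (Sum.inr j) ω = 0 ∨ X (Sum.inr j) ω = 1)
    (hU : ∀ j : Fin n, μ {ω | X (Sum.inr j) ω = 1} = 1 / 2) :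
    μ {ω | |((∑ j, X (Sum.inl j) ω * X (Sum.inr j) ω : ℕ) : ℝ)
              - (1 / 2) * ∑ j, (lam j : ℝ)| ≥ ((1 / 2) * ∑ j, (lam j : ℝ)) / 2}
      ≤ ENNReal.ofReal
          (2 * Real.exp (-0.008 * ((1 / 2) * ∑ j, (lam j : ℝ)))
            + 4 * Real.exp (-0.03 * ((1 / 2) * ∑ j, (lam j : ℝ)) / (⨆ j, (lam j : ℝ)))) := by
  classical
  have hSnn : (0:ℝ) ≤ ∑ j, (lam j : ℝ) := Finset.sum_nonneg fun j _ => (lam j).coe_nonneg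
  set S : ℝ := ∑ j, (lam j : ℝ) with hSdef
  set L : ℝ := ⨆ j, (lam j : ℝ) with hLdef
  have hlamL : ∀ j, (lam j : ℝ) ≤ L := fun j =>
    le_ciSup (f := fun j => (lam j : ℝ)) (Set.Finite.bddAbove (Set.finite_range _)) j
  have hL0 : (0:ℝ) ≤ L := le_trans (lam ⟨0, hn⟩).coe_nonneg (hlamL ⟨0, hn⟩)
  have hQnn : (0:ℝ) ≤ ∑ j, (lam j : ℝ)^2 := Finset.sum_nonneg fun j _ => sq_nonneg _
  set Q : ℝ := ∑ j, (lam j : ℝ)^2 with hQdef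
  have hQLS : Q ≤ L * S := by
    rw [hQdef, hSdef, Finset.mul_sum]
    exact Finset.sum_le_sum fun j _ => by
      rw [sq]; exact mul_le_mul_of_nonneg_right (hlamL j) (lam j).coe_nonneg
  set d : Ω → ℝ := fun ω => ∑ j, ((X (Sum.inl j) ω : ℝ) * (X (Sum.inr j) ω : ℝ)) with hd
  have hsingle : ∀ (t : ℝ) (j : Fin n),
      Integrable (fun ω => Real.exp (t * ((X (Sum.inl j) ω : ℝ) * (X (Sum.inr j) ω : ℝ)))) μ ∧
      ∫ ω, Real.exp (t * ((X (Sum.inl j) ω : ℝ) * (X (Sum.inr j) ω : ℝ))) ∂μ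
        = (1 + Real.exp ((lam j : ℝ) * (Real.exp t - 1))) / 2 := fun t j =>
    aux_single_int (hmeas _) (hmeas _)
      (hindep.indepFun (show (Sum.inl j : Fin n ⊕ Fin n) ≠ Sum.inr j by simp))
      (hA j) (hU01 j) (hU j) t
  have key : ∀ t : ℝ, Integrable (fun ω => Real.exp (t * d ω)) μ ∧
      ∫ ω, Real.exp (t * d ω) ∂μ
        = ∏ j, ((1 + Real.exp ((lam j : ℝ) * (Real.exp t - 1))) / 2) := fun t =>
    aux_sum_exp_prod hmeas hindep lam (fun t j => (hsingle t j).1)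
      (fun t j => (hsingle t j).2) t Finset.univ
  have hmgf_le : ∀ t : ℝ,
      mgf d μ t ≤ Real.exp ((Real.exp t - 1) * S/2 + (Real.exp t - 1)^2 * Q/8) := by
    intro t
    have h1 : mgf d μ t = ∏ j, ((1 + Real.exp ((lam j : ℝ) * (Real.exp t - 1))) / 2) :=
      (key t).2
    rw [h1, hSdef, hQdef]
    exact aux_prod_bound n lam (Real.exp t - 1)
  have up : ∀ t : ℝ, 0 ≤ t → ∀ ε : ℝ, μ {ω | ε ≤ d ω} ≤
      ENNReal.ofReal (Real.exp (-t*ε +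
        ((Real.exp t - 1) * S/2 + (Real.exp t - 1)^2 * Q/8))) := by
    intro t ht ε
    have h1 := measure_ge_le_exp_mul_mgf (μ := μ) (X := d) ε ht (key t).1
    have h2 : (μ {ω | ε ≤ d ω}).toReal ≤ Real.exp (-t*ε +
        ((Real.exp t - 1) * S/2 + (Real.exp t - 1)^2 * Q/8)) := by
      refine h1.trans ?_
      rw [Real.exp_add]
      exact mul_le_mul_of_nonneg_left (hmgf_le t) (Real.exp_pos _).le
    calc μ {ω | ε ≤ d ω} = ENNReal.ofReal ((μ {ω | ε ≤ d ω}).toReal) :=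
          (ENNReal.ofReal_toReal (measure_ne_top _ _)).symm
    _ ≤ _ := ENNReal.ofReal_le_ofReal h2
  have low : ∀ t : ℝ, 0 ≤ t → ∀ ε : ℝ, μ {ω | d ω ≤ ε} ≤
      ENNReal.ofReal (Real.exp (t*ε +
        ((Real.exp (-t) - 1) * S/2 + (Real.exp (-t) - 1)^2 * Q/8))) := by
    intro t ht ε
    have h1 := measure_le_le_exp_mul_mgf (μ := μ) (X := d) (t := -t) ε
      (neg_nonpos.mpr ht) (key (-t)).1
    have h2 : (μ {ω | d ω ≤ ε}).toReal ≤ Real.exp (t*ε +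
        ((Real.exp (-t) - 1) * S/2 + (Real.exp (-t) - 1)^2 * Q/8)) := by
      refine h1.trans ?_
      rw [Real.exp_add, neg_neg]
      exact mul_le_mul_of_nonneg_left (hmgf_le (-t)) (Real.exp_pos _).le
    calc μ {ω | d ω ≤ ε} = ENNReal.ofReal ((μ {ω | d ω ≤ ε}).toReal) :=
          (ENNReal.ofReal_toReal (measure_ne_top _ _)).symm
    _ ≤ _ := ENNReal.ofReal_le_ofReal h2
  refine le_trans (measure_mono
    (?_ : _ ⊆ {ω | (3/4)*S ≤ d ω} ∪ {ω | d ω ≤ (1/4)*S})) ?_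
  · intro ω hω
    simp only [Set.mem_setOf_eq, ge_iff_le] at hω
    have hcast : ((∑ j, X (Sum.inl j) ω * X (Sum.inr j) ω : ℕ) : ℝ) = d ω := by
      rw [hd]; push_cast; rfl
    rw [hcast] at hω
    rcases abs_cases (d ω - 1/2 * S) with ⟨heq, _⟩ | ⟨heq, _⟩ <;> rw [heq] at hω
    · exact Or.inl (by simp only [Set.mem_setOf_eq]; linarith)
    · exact Or.inr (by simp only [Set.mem_setOf_eq]; linarith)
  refine le_trans (measure_union_le _ _) ?_
  rcases le_or_gt L (5/2) with hcase | hcase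
  · -- small λmax : t = 1/10
    set c : ℝ := Real.exp (1/10) - 1 with hcdef
    set b : ℝ := Real.exp (-(1/10)) - 1 with hbdef
    have hc0 : 0 ≤ c := by
      have := Real.add_one_le_exp (1/10 : ℝ); rw [hcdef]; linarith
    have hcub : c ≤ 1/9 := by
      have := aux_exp_le_one_div (show (1:ℝ)/10 < 1 by norm_num)
      rw [hcdef]; norm_num at this ⊢; linarith
    have hb_lb : -(1/10) ≤ b := by
      have := Real.add_one_le_exp (-(1/10) : ℝ); rw [hbdef]; linarith
    have hb_ub : b ≤ -(1/11) := by
      have := aux_exp_le_one_div (show -(1:ℝ)/10 < 1 by norm_num)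
      rw [hbdef]
      have h10 : Real.exp (-(1/10) : ℝ) ≤ 10/11 := by
        rw [show (-(1:ℝ)/10) = (-(1/10) : ℝ) by norm_num] at this
        norm_num at this; linarith
      linarith
    have hQ5 : Q ≤ (5/2) * S := hQLS.trans (by nlinarith)
    have hc2Q : c^2 * Q ≤ (1/81) * ((5/2) * S) := by
      have hc2 : c^2 ≤ 1/81 := by nlinarith [mul_le_mul_of_nonneg_left hcub hc0]
      exact mul_le_mul hc2 hQ5 hQnn (by norm_num)
    have hb2Q : b^2 * Q ≤ (1/100) * ((5/2) * S) := by
      have hb2 : b^2 ≤ 1/100 := by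
        nlinarith [mul_nonneg (by linarith : (0:ℝ) ≤ b + 1/10) (by linarith : (0:ℝ) ≤ -(1/11) - b)]
      exact mul_le_mul hb2 hQ5 hQnn (by norm_num)
    have hcS : c * S ≤ (1/9) * S := mul_le_mul_of_nonneg_right hcub hSnn
    have hbS : b * S ≤ -(1/11) * S := mul_le_mul_of_nonneg_right hb_ub hSnn
    have e1 : -(1/10 : ℝ)*((3/4)*S) + (c * S/2 + c^2 * Q/8) ≤ -0.008*(1/2 * S) := by
      nlinarith [hc2Q, hcS, hSnn]
    have e2 : (1/10 : ℝ)*((1/4)*S) + (b * S/2 + b^2 * Q/8) ≤ -0.008*(1/2 * S) := by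
      nlinarith [hb2Q, hbS, hSnn]
    have hupA : μ {ω | (3/4)*S ≤ d ω} ≤ ENNReal.ofReal (Real.exp (-0.008*(1/2 * S))) :=
      (up (1/10) (by norm_num) ((3/4)*S)).trans
        (ENNReal.ofReal_le_ofReal (Real.exp_le_exp.2 e1))
    have hlowA : μ {ω | d ω ≤ (1/4)*S} ≤ ENNReal.ofReal (Real.exp (-0.008*(1/2 * S))) :=
      (low (1/10) (by norm_num) ((1/4)*S)).trans
        (ENNReal.ofReal_le_ofReal (Real.exp_le_exp.2 e2))
    calc μ {ω | (3/4)*S ≤ d ω} + μ {ω | d ω ≤ (1/4)*S}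
        ≤ ENNReal.ofReal (Real.exp (-0.008*(1/2 * S)))
          + ENNReal.ofReal (Real.exp (-0.008*(1/2 * S))) := add_le_add hupA hlowA
    _ = ENNReal.ofReal (Real.exp (-0.008*(1/2 * S)) + Real.exp (-0.008*(1/2 * S))) :=
          (ENNReal.ofReal_add (Real.exp_pos _).le (Real.exp_pos _).le).symm
    _ ≤ _ := by
          apply ENNReal.ofReal_le_ofReal
          have := Real.exp_pos (-0.03 * (1/2 * S) / L)
          have h2 : Real.exp (-0.008*(1/2 * S)) = Real.exp (-0.008*(1/2 * S)) := rfl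
          linarith [Real.exp_pos (-0.03 * (1/2 * S) / L)]
  · -- large λmax : t = 3/(10 L)
    have hLpos : (0:ℝ) < L := by linarith
    set t : ℝ := 3/(10*L) with htdef
    have ht0 : 0 < t := by positivity
    have htL : t * L = 3/10 := by rw [htdef]; field_simp
    have htle : t ≤ 3/25 := by
      rw [htdef, div_le_div_iff₀ (by positivity) (by norm_num)]
      linarith
    obtain ⟨c, hcdef⟩ : ∃ c : ℝ, c = Real.exp t - 1 := ⟨_, rfl⟩
    obtain ⟨b, hbdef⟩ : ∃ b : ℝ, b = Real.exp (-t) - 1 := ⟨_, rfl⟩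
    have hc0 : 0 ≤ c := by
      have := Real.add_one_le_exp t; rw [hcdef]; linarith
    have hcub : c ≤ 25*t/22 := by
      have h := aux_exp_le_one_div (show t < 1 by linarith)
      have h1t : (0:ℝ) < 1 - t := by linarith
      rw [hcdef]
      have : Real.exp t ≤ 1/(1-t) := h
      have h2 : 1/(1-t) - 1 = t/(1-t) := by field_simp; ring
      have h3 : t/(1-t) ≤ 25*t/22 := by
        rw [div_le_div_iff₀ h1t (by norm_num)]
        nlinarith
      linarith
    have hb_lb : -t ≤ b := by
      have := Real.add_one_le_exp (-t); rw [hbdef]; linarith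
    have hb_ub : b ≤ -(25*t/28) := by
      have h := aux_exp_le_one_div (show -t < 1 by linarith)
      have h1t : (0:ℝ) < 1 + t := by linarith
      rw [hbdef]
      have h1 : Real.exp (-t) ≤ 1/(1+t) := by
        rw [show (1:ℝ) - -t = 1 + t by ring] at h; exact h
      have h2 : 1/(1+t) - 1 = -(t/(1+t)) := by field_simp; ring
      have h3 : t/(1+t) ≥ 25*t/28 := by
        rw [ge_iff_le, div_le_div_iff₀ (by norm_num) h1t]
        nlinarith
      linarith
    have hcL : c * L ≤ 15/44 := by nlinarith
    have hbL : b * L ≤ -(15/56) := by nlinarith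
    have hbL_lb : -(3/10) ≤ b * L := by nlinarith
    have hcQL : c^2 * Q * L ≤ (c*L)^2 * S := by nlinarith [sq_nonneg c, mul_nonneg (mul_nonneg (sq_nonneg c) hL0) (sub_nonneg.mpr hQLS)]
    have hbQL : b^2 * Q * L ≤ (b*L)^2 * S := by nlinarith [sq_nonneg b, mul_nonneg (mul_nonneg (sq_nonneg b) hL0) (sub_nonneg.mpr hQLS)]
    have hcL0 : 0 ≤ c * L := mul_nonneg hc0 hL0
    have hcL2 : (c*L)^2 * S ≤ (15/44)^2 * S := by
      have h := pow_le_pow_left₀ hcL0 hcL 2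
      exact mul_le_mul_of_nonneg_right h hSnn
    have hbL2 : (b*L)^2 * S ≤ (3/10)^2 * S := by
      have h : (b*L)^2 ≤ (3/10)^2 := by
        nlinarith [mul_nonneg (by linarith : (0:ℝ) ≤ b*L + 3/10)
          (by linarith : (0:ℝ) ≤ -(15/56) - b*L)]
      exact mul_le_mul_of_nonneg_right h hSnn
    have hcLS : c * L * S ≤ (15/44) * S := mul_le_mul_of_nonneg_right hcL hSnn
    have hbLS : b * L * S ≤ -(15/56) * S := mul_le_mul_of_nonneg_right hbL hSnn
    have e1 : -t*((3/4)*S) + ((Real.exp t - 1) * S/2 + (Real.exp t - 1)^2 * Q/8)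
        ≤ -0.03*(1/2 * S)/L := by
      rw [← hcdef, le_div_iff₀ hLpos]
      nlinarith [htL, hSnn, hcLS, hcL2, hcQL]
    have e2 : t*((1/4)*S) + ((Real.exp (-t) - 1) * S/2 + (Real.exp (-t) - 1)^2 * Q/8)
        ≤ -0.03*(1/2 * S)/L := by
      rw [← hbdef, le_div_iff₀ hLpos]
      nlinarith [htL, hSnn, hbLS, hbL2, hbQL]
    have hupA : μ {ω | (3/4)*S ≤ d ω} ≤ ENNReal.ofReal (Real.exp (-0.03*(1/2 * S)/L)) :=
      (up t ht0.le ((3/4)*S)).trans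
        (ENNReal.ofReal_le_ofReal (Real.exp_le_exp.2 e1))
    have hlowA : μ {ω | d ω ≤ (1/4)*S} ≤ ENNReal.ofReal (Real.exp (-0.03*(1/2 * S)/L)) :=
      (low t ht0.le ((1/4)*S)).trans
        (ENNReal.ofReal_le_ofReal (Real.exp_le_exp.2 e2))
    calc μ {ω | (3/4)*S ≤ d ω} + μ {ω | d ω ≤ (1/4)*S}
        ≤ ENNReal.ofReal (Real.exp (-0.03*(1/2 * S)/L))
          + ENNReal.ofReal (Real.exp (-0.03*(1/2 * S)/L)) := add_le_add hupA hlowA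
    _ = ENNReal.ofReal (Real.exp (-0.03*(1/2 * S)/L) + Real.exp (-0.03*(1/2 * S)/L)) :=
          (ENNReal.ofReal_add (Real.exp_pos _).le (Real.exp_pos _).le).symm
    _ ≤ _ := by
          apply ENNReal.ofReal_le_ofReal
          linarith [Real.exp_pos (-0.008 * (1/2 * S)), Real.exp_pos (-0.03 * (1/2 * S) / L)]
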